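/- Let Q̃₁, Q̃₂, Q̃₃, Q̃₄ > 0, q̃₁, q̃₂, q̃₃, q̃₄ ∈ ℝ, m_p, ω ∈ ℝ and ℓ ∈ ℕ, and let V be the four-charge effective potential. Then lim_{r→∞} r·(V(r) − m_p²) = 2(m_p² − 2ω²)·(Q̃₁+Q̃₂+Q̃₃+Q̃₄) + 8ω·(q̃₁Q̃₁+q̃₂Q̃₂+q̃₃Q̃₃+q̃₄Q̃₄). -/

import Mathlib

open Real Filter

/-- The harmonic function `H̃(r) = 1 + 4Q̃/r`. -/
noncomputable def Hq (Q r : ℝ) : ℝ := 1 + 4*Q/r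

/-- The four-charge effective potential of a charged massive scalar in the extremal
four-charge STU black hole background. -/
noncomputable def V4 (Q₁ Q₂ Q₃ Q₄ q₁ q₂ q₃ q₄ mp ω : ℝ) (ℓ : ℕ) (r : ℝ) : ℝ :=
  ω^2 + mp^2 * Real.sqrt (Hq Q₁ r * Hq Q₂ r * Hq Q₃ r * Hq Q₄ r)
    - (ω - (4*q₁*Q₁/(r + 4*Q₁) + 4*q₂*Q₂/(r + 4*Q₂)
            + 4*q₃*Q₃/(r + 4*Q₃) + 4*q₄*Q₄/(r + 4*Q₄)))^2
        * (Hq Q₁ r * Hq Q₂ r * Hq Q₃ r * Hq Q₄ r)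
    + ((ℓ : ℝ)*((ℓ : ℝ) + 1))/r^2

noncomputable def Ppoly (Q₁ Q₂ Q₃ Q₄ x : ℝ) : ℝ :=
  (1+4*Q₁*x)*(1+4*Q₂*x)*(1+4*Q₃*x)*(1+4*Q₄*x)

noncomputable def Gpoly (Q₁ Q₂ Q₃ Q₄ x : ℝ) : ℝ :=
  4*(Q₁+Q₂+Q₃+Q₄) + 16*(Q₁*Q₂+Q₁*Q₃+Q₁*Q₄+Q₂*Q₃+Q₂*Q₄+Q₃*Q₄)*x
    + 64*(Q₁*Q₂*Q₃+Q₁*Q₂*Q₄+Q₁*Q₃*Q₄+Q₂*Q₃*Q₄)*x^2 + 256*Q₁*Q₂*Q₃*Q₄*x^3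

noncomputable def Tfun (Q₁ Q₂ Q₃ Q₄ q₁ q₂ q₃ q₄ x : ℝ) : ℝ :=
  4*q₁*Q₁/(1+4*Q₁*x) + 4*q₂*Q₂/(1+4*Q₂*x) + 4*q₃*Q₃/(1+4*Q₃*x) + 4*q₄*Q₄/(1+4*Q₄*x)

noncomputable def Ffun (Q₁ Q₂ Q₃ Q₄ q₁ q₂ q₃ q₄ mp ω : ℝ) (ℓ : ℕ) (x : ℝ) : ℝ :=
  mp^2 * Gpoly Q₁ Q₂ Q₃ Q₄ x / (Real.sqrt (Ppoly Q₁ Q₂ Q₃ Q₄ x) + 1)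
    - ω^2 * Gpoly Q₁ Q₂ Q₃ Q₄ x
    + (2*ω - x * Tfun Q₁ Q₂ Q₃ Q₄ q₁ q₂ q₃ q₄ x) * Tfun Q₁ Q₂ Q₃ Q₄ q₁ q₂ q₃ q₄ x
        * Ppoly Q₁ Q₂ Q₃ Q₄ x
    + ((ℓ : ℝ)*((ℓ : ℝ) + 1))*x

set_option maxHeartbeats 2000000 in
/-- At large `r`, `r·(V(r) − m_p²) → 2(m_p²−2ω²)(Q̃₁+Q̃₂+Q̃₃+Q̃₄) + 8ω(Σᵢ q̃ᵢQ̃ᵢ)`. -/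
theorem stmt_16 (Q₁ Q₂ Q₃ Q₄ q₁ q₂ q₃ q₄ mp ω : ℝ) (ℓ : ℕ)
    (hQ₁ : 0 < Q₁) (hQ₂ : 0 < Q₂) (hQ₃ : 0 < Q₃) (hQ₄ : 0 < Q₄) :
    Tendsto (fun r : ℝ => r * (V4 Q₁ Q₂ Q₃ Q₄ q₁ q₂ q₃ q₄ mp ω ℓ r - mp^2)) atTop
      (nhds (2*(mp^2 - 2*ω^2)*(Q₁ + Q₂ + Q₃ + Q₄)
        + 8*ω*(q₁*Q₁ + q₂*Q₂ + q₃*Q₃ + q₄*Q₄))) := by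
  have hF0 : Ffun Q₁ Q₂ Q₃ Q₄ q₁ q₂ q₃ q₄ mp ω ℓ 0
      = 2*(mp^2 - 2*ω^2)*(Q₁ + Q₂ + Q₃ + Q₄)
        + 8*ω*(q₁*Q₁ + q₂*Q₂ + q₃*Q₃ + q₄*Q₄) := by
    simp only [Ffun, Gpoly, Ppoly, Tfun]
    norm_num [Real.sqrt_one]
    ring
  have hFc : ContinuousAt (Ffun Q₁ Q₂ Q₃ Q₄ q₁ q₂ q₃ q₄ mp ω ℓ) 0 := by
    have hPc : ContinuousAt (Ppoly Q₁ Q₂ Q₃ Q₄) 0 := by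
      unfold Ppoly; fun_prop
    have hGc : ContinuousAt (Gpoly Q₁ Q₂ Q₃ Q₄) 0 := by
      unfold Gpoly; fun_prop
    have hTc : ContinuousAt (Tfun Q₁ Q₂ Q₃ Q₄ q₁ q₂ q₃ q₄) 0 := by
      unfold Tfun
      apply ContinuousAt.add
      apply ContinuousAt.add
      apply ContinuousAt.add
      all_goals exact ContinuousAt.div (by fun_prop) (by fun_prop) (by norm_num)
    have hsc : ContinuousAt (fun x => Real.sqrt (Ppoly Q₁ Q₂ Q₃ Q₄ x) + 1) 0 :=
      (Real.continuous_sqrt.continuousAt.comp hPc).add continuousAt_const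
    have hsne : Real.sqrt (Ppoly Q₁ Q₂ Q₃ Q₄ 0) + 1 ≠ 0 := by
      positivity
    unfold Ffun
    exact ((((continuousAt_const.mul hGc).div hsc hsne).sub
        (continuousAt_const.mul hGc)).add
        ((((continuousAt_const.sub (continuousAt_id.mul hTc)).mul hTc)).mul hPc)).add
        (continuousAt_const.mul continuousAt_id)
  have hmain : Tendsto (fun r : ℝ => Ffun Q₁ Q₂ Q₃ Q₄ q₁ q₂ q₃ q₄ mp ω ℓ r⁻¹) atTop
      (nhds (Ffun Q₁ Q₂ Q₃ Q₄ q₁ q₂ q₃ q₄ mp ω ℓ 0)) :=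
    hFc.tendsto.comp tendsto_inv_atTop_zero
  rw [hF0] at hmain
  apply hmain.congr'
  filter_upwards [eventually_gt_atTop (0:ℝ)] with r hr
  have hrne : r ≠ 0 := ne_of_gt hr
  have h1 : (0:ℝ) < 1 + 4*Q₁*r⁻¹ := by positivity
  have h2 : (0:ℝ) < 1 + 4*Q₂*r⁻¹ := by positivity
  have h3 : (0:ℝ) < 1 + 4*Q₃*r⁻¹ := by positivity
  have h4 : (0:ℝ) < 1 + 4*Q₄*r⁻¹ := by positivity
  have hr1 : (0:ℝ) < r + 4*Q₁ := by positivity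
  have hr2 : (0:ℝ) < r + 4*Q₂ := by positivity
  have hr3 : (0:ℝ) < r + 4*Q₃ := by positivity
  have hr4 : (0:ℝ) < r + 4*Q₄ := by positivity
  have hP : Hq Q₁ r * Hq Q₂ r * Hq Q₃ r * Hq Q₄ r = Ppoly Q₁ Q₂ Q₃ Q₄ r⁻¹ := by
    unfold Hq Ppoly
    field_simp
  have hS : 4*q₁*Q₁/(r + 4*Q₁) + 4*q₂*Q₂/(r + 4*Q₂)
      + 4*q₃*Q₃/(r + 4*Q₃) + 4*q₄*Q₄/(r + 4*Q₄)
      = r⁻¹ * Tfun Q₁ Q₂ Q₃ Q₄ q₁ q₂ q₃ q₄ r⁻¹ := by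
    unfold Tfun
    rw [div_add_div _ _ (ne_of_gt h1) (ne_of_gt h2)]
    field_simp
  have hPpos : 0 < Ppoly Q₁ Q₂ Q₃ Q₄ r⁻¹ := by
    unfold Ppoly; positivity
  have hGP' : Gpoly Q₁ Q₂ Q₃ Q₄ r⁻¹ = r * (Ppoly Q₁ Q₂ Q₃ Q₄ r⁻¹ - 1) := by
    unfold Ppoly Gpoly
    field_simp
    ring
  have hs2' : Real.sqrt (Ppoly Q₁ Q₂ Q₃ Q₄ r⁻¹) ^ 2 = Ppoly Q₁ Q₂ Q₃ Q₄ r⁻¹ :=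
    Real.sq_sqrt hPpos.le
  have hsne' : Real.sqrt (Ppoly Q₁ Q₂ Q₃ Q₄ r⁻¹) + 1 ≠ 0 := by positivity
  have hsqrt : mp^2 * Real.sqrt (Ppoly Q₁ Q₂ Q₃ Q₄ r⁻¹)
      = mp^2 + mp^2 * Gpoly Q₁ Q₂ Q₃ Q₄ r⁻¹ * r⁻¹
          / (Real.sqrt (Ppoly Q₁ Q₂ Q₃ Q₄ r⁻¹) + 1) := by
    have hGP2 : Gpoly Q₁ Q₂ Q₃ Q₄ r⁻¹ * r⁻¹ = Ppoly Q₁ Q₂ Q₃ Q₄ r⁻¹ - 1 := by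
      unfold Ppoly Gpoly
      field_simp
      ring
    rw [eq_comm, add_comm, ← eq_sub_iff_add_eq, div_eq_iff hsne']
    linear_combination mp^2 * hGP2 - mp^2 * hs2'
  unfold Ffun V4
  rw [hP, hS, hsqrt]
  set P := Ppoly Q₁ Q₂ Q₃ Q₄ r⁻¹ with hPd
  set s := Real.sqrt P with hsd
  set T := Tfun Q₁ Q₂ Q₃ Q₄ q₁ q₂ q₃ q₄ r⁻¹ with hTd
  set G := Gpoly Q₁ Q₂ Q₃ Q₄ r⁻¹ with hGd
  clear_value G T s P
  clear hP hS hsqrt hPd hsd hTd hGd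
  field_simp
  linear_combination (-(ω^2*r*(s + 1))) * hGP'
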